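/- For fixed integers λ ≥ 0, n ≥ 2, prime power P = p^r, the limit as q → 0⁺ of the one-variable q-beta weight dS^q(q^λ; a, b) = [(a;q)_∞/(ab;q)_∞]·[(b;q)_λ/(q;q)_λ]·a^λ with a = P^{-(n-1)} and b = P^{-1} equals (1 − P^{-(n-1)})/(1 − P^{-n}) when λ = 0, and (1 − P^{-1})(1 − P^{-(n-1)})/(1 − P^{-n}) · P^{-(n-1)λ} when λ ≥ 1. -/

import Mathlib

open Filter

/-- The infinite q-Pochhammer symbol `(x;q)_∞ = ∏_{i≥0} (1 - q^i x)`. -/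
noncomputable def qPochInf (x q : ℝ) : ℝ := ∏' i : ℕ, (1 - q ^ i * x)

/-- The finite q-Pochhammer symbol `(x;q)_λ = ∏_{i=0}^{λ-1} (1 - q^i x)`. -/
noncomputable def qPoch (x q : ℝ) (l : ℕ) : ℝ := ∏ i ∈ Finset.range l, (1 - q ^ i * x)

/-- The q-beta weight `dS^q(q^λ;a,b) = [(a;q)_∞/(ab;q)_∞]·[(b;q)_λ/(q;q)_λ]·a^λ`. -/
noncomputable def qBetaWeight (q a b : ℝ) (l : ℕ) : ℝ :=
  qPochInf a q / qPochInf (a * b) q * (qPoch b q l / qPoch q q l) * a ^ l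

/-- Weierstrass product inequality: `∏ (1 - aᵢ) ≥ 1 - ∑ aᵢ`. -/
lemma weierstrass_prod (a : ℕ → ℝ) (h0 : ∀ i, 0 ≤ a i) (h1 : ∀ i, a i ≤ 1) (n : ℕ) :
    1 - ∑ i ∈ Finset.range n, a i ≤ ∏ i ∈ Finset.range n, (1 - a i) := by
  induction n with
  | zero => simp
  | succ m ih =>
    rw [Finset.prod_range_succ, Finset.sum_range_succ]
    have hS : 0 ≤ ∑ i ∈ Finset.range m, a i :=
      Finset.sum_nonneg fun i _ => h0 i
    have h1m : 0 ≤ 1 - a m := by linarith [h1 m]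
    calc 1 - (∑ i ∈ Finset.range m, a i + a m)
        ≤ (1 - ∑ i ∈ Finset.range m, a i) * (1 - a m) := by nlinarith [h0 m]
      _ ≤ (∏ i ∈ Finset.range m, (1 - a i)) * (1 - a m) := by
          exact mul_le_mul_of_nonneg_right ih h1m

lemma qPochInf_tendsto (x : ℝ) (hx0 : 0 ≤ x) (hx1 : x < 1) :
    Tendsto (fun q => qPochInf x q) (nhdsWithin 0 (Set.Ioi 0)) (nhds (1 - x)) := by
  have hmem : Set.Ioo (0 : ℝ) 1 ∈ nhdsWithin (0 : ℝ) (Set.Ioi 0) := by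
    apply mem_nhdsWithin.2
    exact ⟨Set.Iio 1, isOpen_Iio, by norm_num, by
      rintro q ⟨hq1, hq0⟩; exact ⟨hq0, hq1⟩⟩
  -- key bounds for q ∈ (0,1)
  have key : ∀ q ∈ Set.Ioo (0 : ℝ) 1,
      1 - x / (1 - q) ≤ qPochInf x q ∧ qPochInf x q ≤ 1 - x := by
    rintro q ⟨hq0, hq1⟩
    have hq0' : (0 : ℝ) ≤ q := le_of_lt hq0
    have hfac0 : ∀ i : ℕ, 0 ≤ q ^ i * x := fun i => mul_nonneg (pow_nonneg hq0' i) hx0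
    have hfacx : ∀ i : ℕ, q ^ i * x ≤ x := fun i => by
      have := pow_le_one₀ hq0' (le_of_lt hq1) (n := i)
      nlinarith
    have hpos : ∀ i : ℕ, 0 < 1 - q ^ i * x := fun i => by
      have := hfacx i; linarith
    have hle1 : ∀ i : ℕ, 1 - q ^ i * x ≤ 1 := fun i => by linarith [hfac0 i]
    -- summability of logs
    have hsum : Summable fun i : ℕ => Real.log (1 - q ^ i * x) := by
      rw [← summable_neg_iff]
      apply Summable.of_nonneg_of_le
        (fun i => by
          have : Real.log (1 - q ^ i * x) ≤ 0 :=
            Real.log_nonpos (le_of_lt (hpos i)) (hle1 i)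
          linarith)
        (fun i => ?_) (Summable.mul_left (x / (1 - x)) (summable_geometric_of_lt_one hq0' hq1))
      have h1 : -Real.log (1 - q ^ i * x) = Real.log (1 - q ^ i * x)⁻¹ := by
        rw [Real.log_inv]
      rw [h1]
      have h2 : Real.log (1 - q ^ i * x)⁻¹ ≤ (1 - q ^ i * x)⁻¹ - 1 :=
        Real.log_le_sub_one_of_pos (inv_pos.2 (hpos i))
      have h3 : (1 - q ^ i * x)⁻¹ - 1 = (q ^ i * x) / (1 - q ^ i * x) := by
        field_simp [(hpos i).ne']; ring
      have h4 : (q ^ i * x) / (1 - q ^ i * x) ≤ (q ^ i * x) / (1 - x) := by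
        apply div_le_div_of_nonneg_left (hfac0 i) (by linarith) (by linarith [hfacx i])
      have h5 : (q ^ i * x) / (1 - x) = x / (1 - x) * q ^ i := by ring
      linarith
    have hmult : Multipliable fun i : ℕ => 1 - q ^ i * x := by
      exact Real.multipliable_of_summable_log hpos hsum
    have hprod := hmult.hasProd.tendsto_prod_nat
    constructor
    · -- lower bound
      apply ge_of_tendsto hprod
      filter_upwards with n
      have hW := weierstrass_prod (fun i => q ^ i * x) hfac0
        (fun i => by show q ^ i * x ≤ 1; linarith [hpos i]) n
      have hsum' : ∑ i ∈ Finset.range n, q ^ i * x ≤ x / (1 - q) := by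
        have hg : ∑ i ∈ Finset.range n, q ^ i ≤ (1 - q)⁻¹ := by
          have := Summable.sum_le_tsum (Finset.range n)
            (fun i _ => pow_nonneg hq0' i) (summable_geometric_of_lt_one hq0' hq1)
          rwa [tsum_geometric_of_lt_one hq0' hq1] at this
        calc ∑ i ∈ Finset.range n, q ^ i * x
            = (∑ i ∈ Finset.range n, q ^ i) * x := by rw [Finset.sum_mul]
          _ ≤ (1 - q)⁻¹ * x := mul_le_mul_of_nonneg_right hg hx0
          _ = x / (1 - q) := inv_mul_eq_div _ _
      linarith
    · -- upper bound
      apply le_of_tendsto hprod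
      filter_upwards [eventually_ge_atTop 1] with n hn
      obtain ⟨m, rfl⟩ := Nat.exists_eq_add_of_le hn
      rw [Nat.add_comm, Finset.prod_range_succ']
      simp only [pow_zero, one_mul]
      calc (∏ i ∈ Finset.range m, (1 - q ^ (i + 1) * x)) * (1 - x)
          ≤ 1 * (1 - x) := by
            apply mul_le_mul_of_nonneg_right _ (by linarith)
            apply Finset.prod_le_one (fun i _ => le_of_lt (hpos (i + 1)))
              (fun i _ => hle1 (i + 1))
        _ = 1 - x := one_mul _
  -- squeeze
  have hlow : Tendsto (fun q : ℝ => 1 - x / (1 - q)) (nhdsWithin 0 (Set.Ioi 0))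
      (nhds (1 - x)) := by
    have : Tendsto (fun q : ℝ => 1 - x / (1 - q)) (nhds 0) (nhds (1 - x / (1 - 0))) := by
      apply Tendsto.sub tendsto_const_nhds
      apply Tendsto.div tendsto_const_nhds
        (Tendsto.sub tendsto_const_nhds tendsto_id) (by norm_num)
    simpa using this.mono_left nhdsWithin_le_nhds
  apply tendsto_of_tendsto_of_tendsto_of_le_of_le' hlow tendsto_const_nhds
  · filter_upwards [hmem] with q hq; exact (key q hq).1
  · filter_upwards [hmem] with q hq; exact (key q hq).2

lemma qPoch_cont (b : ℝ) (l : ℕ) : Continuous fun q : ℝ => qPoch b q l := by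
  unfold qPoch
  exact continuous_finset_prod _ fun i _ => by continuity

lemma qPochq_cont (l : ℕ) : Continuous fun q : ℝ => qPoch q q l := by
  unfold qPoch
  exact continuous_finset_prod _ fun i _ => by continuity

lemma qPoch_zero (b : ℝ) (l : ℕ) : qPoch b 0 l = if l = 0 then 1 else 1 - b := by
  cases l with
  | zero => simp [qPoch]
  | succ m =>
    simp only [Nat.succ_ne_zero, if_false]
    unfold qPoch
    rw [Finset.prod_range_succ']
    simp

lemma qPochq_zero (l : ℕ) : qPoch 0 0 l = 1 := by
  unfold qPoch
  apply Finset.prod_eq_one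
  intro i _
  simp

/-- As `q → 0⁺`, the q-beta weight with `a = P^{-(n-1)}`, `b = P^{-1}` (for a prime power
`P = p^r`) tends to the non-Archimedean measure: `(1-P^{-(n-1)})/(1-P^{-n})` for `λ = 0` and
`(1-P^{-1})(1-P^{-(n-1)})/(1-P^{-n})·P^{-(n-1)λ}` for `λ ≥ 1`. -/
theorem stmt8 (p r : ℕ) (hp : p.Prime) (hr : 1 ≤ r) (P : ℝ) (hP : P = (p : ℝ) ^ r)
    (n : ℕ) (hn : 2 ≤ n) (l : ℕ) :
    Tendsto (fun q : ℝ => qBetaWeight q (P⁻¹ ^ (n - 1)) P⁻¹ l)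
      (nhdsWithin 0 (Set.Ioi 0))
      (nhds (if l = 0 then (1 - P⁻¹ ^ (n - 1)) / (1 - P⁻¹ ^ n)
        else (1 - P⁻¹) * (1 - P⁻¹ ^ (n - 1)) / (1 - P⁻¹ ^ n) * (P⁻¹ ^ (n - 1)) ^ l)) := by
  have hP1 : (1 : ℝ) < P := by
    rw [hP]
    apply one_lt_pow₀ (by exact_mod_cast hp.one_lt) (by omega)
  have hPinv0 : 0 < P⁻¹ := inv_pos.2 (by linarith)
  have hPinv1 : P⁻¹ < 1 := inv_lt_one_of_one_lt₀ hP1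
  set a : ℝ := P⁻¹ ^ (n - 1) with ha
  set b : ℝ := P⁻¹ with hb
  have ha0 : 0 ≤ a := pow_nonneg (le_of_lt hPinv0) _
  have ha1 : a < 1 := pow_lt_one₀ (le_of_lt hPinv0) hPinv1 (by omega)
  have hab : a * b = P⁻¹ ^ n := by
    rw [ha, hb, ← pow_succ]
    congr 1
    omega
  have hab0 : 0 ≤ a * b := mul_nonneg ha0 (le_of_lt hPinv0)
  have hab1 : a * b < 1 := by
    rw [hab]; exact pow_lt_one₀ (le_of_lt hPinv0) hPinv1 (by omega)
  have h1 := qPochInf_tendsto a ha0 ha1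
  have h2 := qPochInf_tendsto (a * b) hab0 hab1
  have h3 : Tendsto (fun q : ℝ => qPoch b q l) (nhdsWithin 0 (Set.Ioi 0))
      (nhds (qPoch b 0 l)) :=
    ((qPoch_cont b l).tendsto 0).mono_left nhdsWithin_le_nhds
  have h4 : Tendsto (fun q : ℝ => qPoch q q l) (nhdsWithin 0 (Set.Ioi 0))
      (nhds (1 : ℝ)) := by
    have := ((qPochq_cont l).tendsto 0).mono_left
      (nhdsWithin_le_nhds (s := Set.Ioi (0:ℝ)))
    rwa [qPochq_zero] at this
  have habne : (1 : ℝ) - a * b ≠ 0 := by linarith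
  have hmain : Tendsto (fun q : ℝ => qBetaWeight q a b l) (nhdsWithin 0 (Set.Ioi 0))
      (nhds ((1 - a) / (1 - a * b) * (qPoch b 0 l / 1) * a ^ l)) := by
    unfold qBetaWeight
    exact (((h1.div h2 habne).mul (h3.div h4 one_ne_zero)).mul tendsto_const_nhds)
  convert hmain using 2
  rw [qPoch_zero, ← hab]
  cases l with
  | zero => simp
  | succ m =>
    simp only [Nat.succ_ne_zero, if_false]
    ring
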